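/- Let P ∈ ℝ^{n×n} be symmetric positive semidefinite, let Q ∈ ℝ^{m×m} be symmetric positive definite, and let B ∈ ℝ^{m×n} have full column rank (rank B = n). Consider the real (n+m)×(n+m) block matrix J = [[−P, −Bᵀ], [B, −Q]]. Then every complex eigenvalue λ of J satisfies Re(λ) < 0. -/

import Mathlib

open Matrix

private lemma re_stardot {ι : Type*} [Fintype ι] (A : Matrix ι ι ℝ) (x : ι → ℂ) :
    (star x ⬝ᵥ (A.map Complex.ofReal) *ᵥ x).re
      = (fun i => (x i).re) ⬝ᵥ A *ᵥ (fun i => (x i).re)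
        + (fun i => (x i).im) ⬝ᵥ A *ᵥ (fun i => (x i).im) := by
  simp only [dotProduct, mulVec, Pi.star_apply, map_apply, Complex.re_sum,
    Complex.mul_re, RingHom.id_apply]
  rw [← Finset.sum_add_distrib]
  refine Finset.sum_congr rfl fun i _ => ?_
  simp only [Complex.re_sum, Complex.im_sum, Complex.mul_re, Complex.mul_im,
    Complex.ofReal_re, Complex.ofReal_im, RCLike.star_def, Complex.conj_re, Complex.conj_im,
    zero_mul, sub_zero, add_zero, zero_add, Finset.mul_sum]
  simp [Finset.sum_neg_distrib, sub_neg_eq_add]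

private lemma rank_mulVec_inj {m n : ℕ} (B : Matrix (Fin m) (Fin n) ℝ) (hB : B.rank = n)
    {w : Fin n → ℝ} (hw : B *ᵥ w = 0) : w = 0 := by
  have h := LinearMap.finrank_range_add_finrank_ker B.mulVecLin
  rw [Matrix.rank] at hB
  rw [hB, Module.finrank_fin_fun (R := ℝ)] at h
  have hker : Module.finrank ℝ (LinearMap.ker B.mulVecLin) = 0 := by omega
  have hbot : LinearMap.ker B.mulVecLin = ⊥ := Submodule.finrank_eq_zero.mp hker
  have hmem : w ∈ LinearMap.ker B.mulVecLin := by
    simpa [Matrix.mulVecLin_apply] using hw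
  simpa [hbot] using hmem

/-- For `J = [[−P, −Bᵀ], [B, −Q]]` with `P` symmetric positive semidefinite, `Q`
symmetric positive definite and `B` of full column rank, every complex eigenvalue `λ`
of `J` satisfies `Re λ < 0`. -/
theorem generalized_gan_jacobian_eigenvalues_negative
    {n m : ℕ} (P : Matrix (Fin n) (Fin n) ℝ) (Q : Matrix (Fin m) (Fin m) ℝ)
    (B : Matrix (Fin m) (Fin n) ℝ)
    (hPsymm : P.IsSymm) (hPpsd : P.PosSemidef)
    (hQsymm : Q.IsSymm) (hQpd : Q.PosDef) (hB : B.rank = n)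
    (J : Matrix (Fin n ⊕ Fin m) (Fin n ⊕ Fin m) ℝ)
    (hJ : J = Matrix.fromBlocks (-P) (-Bᵀ) B (-Q)) :
    ∀ lam ∈ spectrum ℂ (J.map Complex.ofReal), lam.re < 0 := by
  intro lam hlam
  set M := J.map Complex.ofReal with hM
  rw [spectrum.mem_iff] at hlam
  have hdet : (algebraMap ℂ (Matrix (Fin n ⊕ Fin m) (Fin n ⊕ Fin m) ℂ) lam - M).det = 0 := by
    by_contra h
    exact hlam ((Matrix.isUnit_iff_isUnit_det _).mpr (isUnit_iff_ne_zero.mpr h))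
  obtain ⟨v, hv0, hv⟩ := Matrix.exists_mulVec_eq_zero_iff.mpr hdet
  have heig : M *ᵥ v = lam • v := by
    have h1 : (algebraMap ℂ (Matrix (Fin n ⊕ Fin m) (Fin n ⊕ Fin m) ℂ) lam - M) *ᵥ v
        = algebraMap ℂ _ lam *ᵥ v - M *ᵥ v := Matrix.sub_mulVec _ _ _
    rw [hv] at h1
    have h2 : (algebraMap ℂ (Matrix (Fin n ⊕ Fin m) (Fin n ⊕ Fin m) ℂ) lam) *ᵥ v = lam • v := by
      rw [Algebra.algebraMap_eq_smul_one, smul_mulVec, one_mulVec]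
    rw [h2] at h1
    exact (sub_eq_zero.mp h1.symm).symm
  -- real and imaginary parts of v
  set vr : (Fin n ⊕ Fin m) → ℝ := fun i => (v i).re with hvr
  set vi : (Fin n ⊕ Fin m) → ℝ := fun i => (v i).im with hvi
  -- squared norm
  set S : ℝ := ∑ i, Complex.normSq (v i) with hS
  have hSpos : 0 < S := by
    have hne : ∃ i, v i ≠ 0 := by
      by_contra h
      push_neg at h
      exact hv0 (funext h)
    obtain ⟨i0, hi0⟩ := hne
    refine Finset.sum_pos' (fun i _ => Complex.normSq_nonneg _) ⟨i0, Finset.mem_univ _, ?_⟩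
    exact Complex.normSq_pos.mpr hi0
  have hdot : star v ⬝ᵥ v = (S : ℂ) := by
    simp only [dotProduct, Pi.star_apply, hS, Complex.ofReal_sum]
    exact Finset.sum_congr rfl fun i _ => (Complex.normSq_eq_conj_mul_self).symm
  have key : (star v ⬝ᵥ M *ᵥ v).re = lam.re * S := by
    rw [heig, dotProduct_smul, smul_eq_mul, hdot]
    simp [Complex.mul_re]
  -- quadratic form of real vectors against J
  have hquad : ∀ w : (Fin n ⊕ Fin m) → ℝ,
      w ⬝ᵥ J *ᵥ w = -((w ∘ Sum.inl) ⬝ᵥ P *ᵥ (w ∘ Sum.inl))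
        - ((w ∘ Sum.inr) ⬝ᵥ Q *ᵥ (w ∘ Sum.inr)) := by
    intro w
    have hw : Sum.elim (w ∘ Sum.inl) (w ∘ Sum.inr) = w := Sum.elim_comp_inl_inr w
    conv_lhs => rw [← hw]
    rw [hJ, fromBlocks_mulVec, sumElim_dotProduct_sumElim]
    have hcancel : (w ∘ Sum.inl) ⬝ᵥ (Bᵀ *ᵥ (w ∘ Sum.inr))
        = (w ∘ Sum.inr) ⬝ᵥ (B *ᵥ (w ∘ Sum.inl)) := by
      rw [dotProduct_mulVec, vecMul_transpose, dotProduct_comm]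
    simp only [neg_mulVec, dotProduct_add, dotProduct_neg, Sum.elim_comp_inl, Sum.elim_comp_inr]
    rw [hcancel]
    ring
  have hre : lam.re * S
      = -((vr ∘ Sum.inl) ⬝ᵥ P *ᵥ (vr ∘ Sum.inl)) - ((vr ∘ Sum.inr) ⬝ᵥ Q *ᵥ (vr ∘ Sum.inr))
        + (-((vi ∘ Sum.inl) ⬝ᵥ P *ᵥ (vi ∘ Sum.inl)) - ((vi ∘ Sum.inr) ⬝ᵥ Q *ᵥ (vi ∘ Sum.inr))) := by
    rw [← key, hM, re_stardot J v, hquad vr, hquad vi]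
  -- nonnegativity of the four quadratic terms
  have hP1 : 0 ≤ (vr ∘ Sum.inl) ⬝ᵥ P *ᵥ (vr ∘ Sum.inl) := by simpa using hPpsd.dotProduct_mulVec_nonneg (vr ∘ Sum.inl)
  have hP2 : 0 ≤ (vi ∘ Sum.inl) ⬝ᵥ P *ᵥ (vi ∘ Sum.inl) := by simpa using hPpsd.dotProduct_mulVec_nonneg (vi ∘ Sum.inl)
  have hQ1 : 0 ≤ (vr ∘ Sum.inr) ⬝ᵥ Q *ᵥ (vr ∘ Sum.inr) := by
    simpa using hQpd.posSemidef.dotProduct_mulVec_nonneg (vr ∘ Sum.inr)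
  have hQ2 : 0 ≤ (vi ∘ Sum.inr) ⬝ᵥ Q *ᵥ (vi ∘ Sum.inr) := by
    simpa using hQpd.posSemidef.dotProduct_mulVec_nonneg (vi ∘ Sum.inr)
  by_contra hcon
  push_neg at hcon
  have hle : lam.re ≤ 0 := by nlinarith
  have hre0 : lam.re = 0 := le_antisymm hle hcon
  rw [hre0, zero_mul] at hre
  -- all four terms vanish
  have hQr0 : (vr ∘ Sum.inr) ⬝ᵥ Q *ᵥ (vr ∘ Sum.inr) = 0 := by linarith
  have hQi0 : (vi ∘ Sum.inr) ⬝ᵥ Q *ᵥ (vi ∘ Sum.inr) = 0 := by linarith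
  have hyr : vr ∘ Sum.inr = 0 := by
    by_contra h
    have := hQpd.dotProduct_mulVec_pos (x := vr ∘ Sum.inr) h
    simp only [star_trivial] at this
    linarith
  have hyi : vi ∘ Sum.inr = 0 := by
    by_contra h
    have := hQpd.dotProduct_mulVec_pos (x := vi ∘ Sum.inr) h
    simp only [star_trivial] at this
    linarith
  have hy0 : ∀ j, v (Sum.inr j) = 0 := by
    intro j
    have h1 : (v (Sum.inr j)).re = 0 := congrFun hyr j
    have h2 : (v (Sum.inr j)).im = 0 := congrFun hyi j
    exact Complex.ext h1 h2
  -- the eigen-equation in the second block gives B x = 0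
  have hBx : ∀ j, ∑ i, (B j i : ℂ) * v (Sum.inl i) = 0 := by
    intro j
    have h1 : (M *ᵥ v) (Sum.inr j) = lam * v (Sum.inr j) := by rw [heig]; rfl
    rw [hy0 j, mul_zero] at h1
    rw [← h1]
    simp only [hM, mulVec, dotProduct, map_apply, Fintype.sum_sum_type]
    rw [hJ]
    have hz : ∀ j' : Fin m, ((fromBlocks (-P) (-Bᵀ) B (-Q)) (Sum.inr j) (Sum.inr j') : ℂ)
        * v (Sum.inr j') = 0 := by
      intro j'; rw [hy0 j', mul_zero]
    rw [Finset.sum_congr rfl (fun j' _ => hz j'), Finset.sum_const_zero, add_zero]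
    simp [fromBlocks_apply₂₁]
  have hBr : B *ᵥ (vr ∘ Sum.inl) = 0 := by
    funext j
    have := congrArg Complex.re (hBx j)
    simpa [Complex.re_sum, mulVec, dotProduct] using this
  have hBi : B *ᵥ (vi ∘ Sum.inl) = 0 := by
    funext j
    have := congrArg Complex.im (hBx j)
    simpa [Complex.im_sum, mulVec, dotProduct] using this
  have hxr : vr ∘ Sum.inl = 0 := rank_mulVec_inj B hB hBr
  have hxi : vi ∘ Sum.inl = 0 := rank_mulVec_inj B hB hBi
  apply hv0
  funext i
  cases i with
  | inl i => exact Complex.ext (congrFun hxr i) (congrFun hxi i)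
  | inr j => exact hy0 j
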